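/- Let γ > 1 satisfy e^{2/γ²} − 1 + e^{2(1−γ²)/γ²}/(γ² − 1) ≤ 1. If a random variable X satisfies ‖X‖_p ≤ C₁√p + C₂ p^{1/θ} for all p ≥ 2 (with C₁, C₂ > 0, θ > 0), then ‖X‖_{Ψ_{θ,K}} ≤ γ e C₁, where K = γ^{2/θ} C₂ / (γ C₁). -/

import Mathlib

open MeasureTheory Real

/-- Auxiliary: polynomial growth beaten by exponential, with scaling. -/
lemma aux_rpow_le_exp {a u : ℝ} (ha : 0 ≤ a) (hu : 0 ≤ u) :
    u ^ a ≤ (1 + (Nat.factorial (Nat.ceil a) : ℝ)) * Real.exp u := by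
  set n := Nat.ceil a with hn
  have hfac : (1:ℝ) ≤ (Nat.factorial n : ℝ) := by exact_mod_cast Nat.one_le_iff_ne_zero.mpr (Nat.factorial_ne_zero n)
  have hexp : (1:ℝ) ≤ Real.exp u := Real.one_le_exp hu
  rcases le_or_gt u 1 with h1 | h1
  · have : u ^ a ≤ 1 := Real.rpow_le_one hu h1 ha
    nlinarith [Real.exp_pos u]
  · have h2 : u ^ a ≤ u ^ (n : ℝ) :=
      Real.rpow_le_rpow_of_exponent_le h1.le (Nat.le_ceil a)
    have h3 : u ^ (n : ℝ) = u ^ n := Real.rpow_natCast u n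
    have h4 : u ^ n ≤ (Nat.factorial n : ℝ) * Real.exp u := by
      have := Real.pow_div_factorial_le_exp (x := u) (by linarith) n
      have hfp : (0:ℝ) < (Nat.factorial n : ℝ) := by linarith
      calc u ^ n = u ^ n / (Nat.factorial n : ℝ) * (Nat.factorial n : ℝ) := by field_simp
        _ ≤ Real.exp u * (Nat.factorial n : ℝ) := by
            apply mul_le_mul_of_nonneg_right this hfp.le
        _ = (Nat.factorial n : ℝ) * Real.exp u := by ring
    calc u ^ a ≤ u ^ n := h3 ▸ h2
      _ ≤ (Nat.factorial n : ℝ) * Real.exp u := h4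
      _ ≤ (1 + (Nat.factorial n : ℝ)) * Real.exp u := by nlinarith

/-- Scaled version: `u ^ a ≤ p ^ a * (1 + ⌈a⌉!) * exp (u / p)`. -/
lemma aux_rpow_le_exp_div {a p u : ℝ} (ha : 0 ≤ a) (hp : 0 < p) (hu : 0 ≤ u) :
    u ^ a ≤ p ^ a * (1 + (Nat.factorial (Nat.ceil a) : ℝ)) * Real.exp (u / p) := by
  have h0 : u = p * (u / p) := by field_simp
  have h1 : u ^ a = p ^ a * (u / p) ^ a := by
    rw [h0]
    rw [Real.mul_rpow hp.le (by positivity)]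
    congr 1
    · rw [← h0]
  rw [h1, mul_assoc]
  apply mul_le_mul_of_nonneg_left _ (Real.rpow_nonneg hp.le a)
  exact aux_rpow_le_exp ha (by positivity)

/-- The Generalized Bernstein–Orlicz norm associated with a function `Ψ`:
`‖X‖_Ψ = inf { η > 0 : E[Ψ(|X|/η)] ≤ 1 }`. -/
noncomputable def gboNorm {Ω : Type*} [MeasurableSpace Ω] (μ : Measure Ω)
    (Ψ : ℝ → ℝ) (X : Ω → ℝ) : ℝ :=
  sInf {η : ℝ | 0 < η ∧ ∫ ω, Ψ (|X ω| / η) ∂μ ≤ 1}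

/-- Sharper GBO-norm bound: if `‖X‖_p ≤ C₁√p + C₂ p^{1/θ}` for all `p ≥ 2`, and
`γ > 1` satisfies `e^{2/γ²} − 1 + e^{2(1−γ²)/γ²}/(γ²−1) ≤ 1`, then
`‖X‖_{Ψ_{θ,K}} ≤ γ e C₁` with `K = γ^{2/θ} C₂ / (γ C₁)`.  Here `ΨK` is the
inverse of `t ↦ √(log(t+1)) + K (log(t+1))^{1/θ}`. -/
theorem gbo_norm_bound {Ω : Type*} [MeasurableSpace Ω]
    (μ : Measure Ω) [IsProbabilityMeasure μ]
    (θ : ℝ) (hθ : 0 < θ) (X : Ω → ℝ) (hX : Measurable X)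
    (C₁ C₂ : ℝ) (hC₁ : 0 < C₁) (hC₂ : 0 < C₂)
    (γ : ℝ) (hγ : 1 < γ)
    (hγineq : Real.exp (2 / γ ^ 2) - 1 +
      Real.exp (2 * (1 - γ ^ 2) / γ ^ 2) / (γ ^ 2 - 1) ≤ 1)
    (ΨK : ℝ → ℝ) (hΨmono : Monotone ΨK)
    (hΨinv : ∀ t : ℝ, 0 ≤ t →
      ΨK (Real.sqrt (Real.log (t + 1)) +
        (γ ^ (2 / θ) * C₂ / (γ * C₁)) * (Real.log (t + 1)) ^ (1 / θ)) = t)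
    (hmom : ∀ p : ℝ, 2 ≤ p →
      (∫ ω, |X ω| ^ p ∂μ) ^ (1 / p) ≤ C₁ * Real.sqrt p + C₂ * p ^ (1 / θ)) :
    gboNorm μ ΨK X ≤ γ * Real.exp 1 * C₁ := by
  have hγ0 : (0:ℝ) < γ := lt_trans one_pos hγ
  set K : ℝ := γ ^ (2 / θ) * C₂ / (γ * C₁) with hKdef
  have hK : 0 < K := div_pos (mul_pos (Real.rpow_pos_of_pos hγ0 _) hC₂) (mul_pos hγ0 hC₁)
  set η : ℝ := γ * Real.exp 1 * C₁ with hηdef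
  have hη : 0 < η := by positivity
  set φ : ℝ → ℝ := fun s => Real.sqrt s + K * s ^ (1/θ) with hφdef
  -- ΨK on the range of φ
  have hΨφ : ∀ s : ℝ, 0 ≤ s → ΨK (φ s) = Real.exp s - 1 := by
    intro s hs
    have h1 : (0:ℝ) ≤ Real.exp s - 1 := by
      have := Real.one_le_exp hs; linarith
    have h2 := hΨinv (Real.exp s - 1) h1
    rwa [sub_add_cancel, Real.log_exp] at h2
  have hΨ0 : ΨK 0 = 0 := by
    have h := hΨφ 0 le_rfl
    have hφ0 : φ 0 = 0 := by
      have hz : (0:ℝ) ^ ((1:ℝ)/θ) = 0 := Real.zero_rpow (by positivity)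
      simp only [hφdef, Real.sqrt_zero, hz, mul_zero, add_zero]
    rw [hφ0] at h
    simpa using h
  have hΨnonneg : ∀ y : ℝ, 0 ≤ y → 0 ≤ ΨK y := fun y hy => hΨ0 ▸ hΨmono hy
  -- reduce to the integral bound
  suffices h : ∫ ω, ΨK (|X ω| / η) ∂μ ≤ 1 by
    have hb : BddBelow {x : ℝ | 0 < x ∧ ∫ ω, ΨK (|X ω| / x) ∂μ ≤ 1} :=
      ⟨0, fun x hx => hx.1.le⟩
    exact csInf_le hb ⟨hη, h⟩
  by_cases hInt : Integrable (fun ω => ΨK (|X ω| / η)) μ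
  swap
  · rw [integral_undef hInt]; exact zero_le_one
  have hfnn : ∀ ω, 0 ≤ ΨK (|X ω| / η) := fun ω => hΨnonneg _ (by positivity)
  -- moment integrability and moment bounds
  have hXp : ∀ p : ℝ, 2 ≤ p → Integrable (fun ω => |X ω| ^ p) μ ∧
      ∫ ω, |X ω| ^ p ∂μ ≤ (C₁ * Real.sqrt p + C₂ * p ^ (1/θ)) ^ p := by
    intro p hp
    have hp0 : (0:ℝ) < p := by linarith
    set n : ℕ := Nat.ceil (1/θ) with hn
    set D : ℝ := p ^ ((1:ℝ)/2) * (1 + (Nat.factorial (Nat.ceil ((1:ℝ)/2)) : ℝ))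
        + K * (p ^ ((1:ℝ)/θ) * (1 + (Nat.factorial n : ℝ))) with hD
    have hD0 : 0 < D := by positivity
    have hφD : ∀ s : ℝ, 0 ≤ s → φ s ≤ D * Real.exp (s / p) := by
      intro s hs
      have h1 : Real.sqrt s ≤ p ^ ((1:ℝ)/2) * (1 + (Nat.factorial (Nat.ceil ((1:ℝ)/2)) : ℝ)) * Real.exp (s / p) := by
        rw [Real.sqrt_eq_rpow]
        exact aux_rpow_le_exp_div (by norm_num) hp0 hs
      have h2 : s ^ ((1:ℝ)/θ) ≤ p ^ ((1:ℝ)/θ) * (1 + (Nat.factorial n : ℝ)) * Real.exp (s / p) :=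
        aux_rpow_le_exp_div (by positivity) hp0 hs
      have hK' : K * (s ^ ((1:ℝ)/θ)) ≤ K * (p ^ ((1:ℝ)/θ) * (1 + (Nat.factorial n : ℝ)) * Real.exp (s / p)) :=
        mul_le_mul_of_nonneg_left h2 hK.le
      simp only [hφdef]
      calc Real.sqrt s + K * s ^ (1/θ)
          ≤ p ^ ((1:ℝ)/2) * (1 + (Nat.factorial (Nat.ceil ((1:ℝ)/2)) : ℝ)) * Real.exp (s / p)
            + K * (p ^ ((1:ℝ)/θ) * (1 + (Nat.factorial n : ℝ)) * Real.exp (s / p)) := by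
            exact add_le_add h1 hK'
        _ = D * Real.exp (s / p) := by rw [hD]; ring
    -- pointwise domination: y ^ p ≤ D^p * (1 + ΨK y)
    have hyD : ∀ y : ℝ, 0 ≤ y → y ^ p ≤ D ^ p * (1 + ΨK y) := by
      intro y hy
      rcases le_or_gt y D with hyD' | hyD'
      · calc y ^ p ≤ D ^ p := Real.rpow_le_rpow hy hyD' hp0.le
          _ ≤ D ^ p * (1 + ΨK y) := by
              apply le_mul_of_one_le_right (Real.rpow_nonneg hD0.le p)
              have := hΨnonneg y hy; linarith
      · have hyD0 : (1:ℝ) < y / D := (one_lt_div hD0).mpr hyD'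
        set s : ℝ := p * Real.log (y / D) with hsdef
        have hs0 : 0 < s := mul_pos hp0 (Real.log_pos hyD0)
        have hφs : φ s ≤ y := by
          have h1 : φ s ≤ D * Real.exp (s / p) := hφD s hs0.le
          have h2 : s / p = Real.log (y / D) := by field_simp [hsdef]; exact hsdef
          rw [h2, Real.exp_log (by positivity)] at h1
          calc φ s ≤ D * (y / D) := h1
            _ = y := by field_simp
        have h3 : Real.exp s - 1 ≤ ΨK y := hΨφ s hs0.le ▸ hΨmono hφs
        have h4 : Real.exp s = (y / D) ^ p := by
          rw [hsdef, Real.rpow_def_of_pos (by positivity : (0:ℝ) < y / D)]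
          ring_nf
        have h5 : (y / D) ^ p = y ^ p / D ^ p := Real.div_rpow hy hD0.le p
        have h6 : 0 < D ^ p := Real.rpow_pos_of_pos hD0 p
        rw [h4, h5] at h3
        calc y ^ p = D ^ p * (y ^ p / D ^ p) := by field_simp
          _ ≤ D ^ p * (1 + ΨK y) := by
              apply mul_le_mul_of_nonneg_left _ h6.le
              linarith
    have hint : Integrable (fun ω => |X ω| ^ p) μ := by
      apply Integrable.mono' (g := fun ω => η ^ p * D ^ p * (1 + ΨK (|X ω| / η)))
      · exact (((integrable_const (1:ℝ)).add hInt).const_mul _)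
      · have : Measurable fun ω => |X ω| ^ p := by fun_prop
        exact this.aestronglyMeasurable
      · apply Filter.Eventually.of_forall
        intro ω
        have hy : (0:ℝ) ≤ |X ω| / η := by positivity
        have h1 : |X ω| ^ p = η ^ p * (|X ω| / η) ^ p := by
          rw [Real.div_rpow (abs_nonneg _) hη.le]
          field_simp [ne_of_gt (Real.rpow_pos_of_pos hη p)]
        rw [Real.norm_eq_abs, abs_of_nonneg (Real.rpow_nonneg (abs_nonneg _) p), h1, mul_assoc]
        exact mul_le_mul_of_nonneg_left (hyD _ hy) (Real.rpow_nonneg hη.le p)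
    refine ⟨hint, ?_⟩
    have hI0 : 0 ≤ ∫ ω, |X ω| ^ p ∂μ :=
      integral_nonneg fun ω => Real.rpow_nonneg (abs_nonneg _) p
    have hmm := hmom p hp
    have h1 : ∫ ω, |X ω| ^ p ∂μ = ((∫ ω, |X ω| ^ p ∂μ) ^ ((1:ℝ)/p)) ^ p := by
      rw [← Real.rpow_mul hI0, one_div, inv_mul_cancel₀ hp0.ne', Real.rpow_one]
    rw [h1]
    exact Real.rpow_le_rpow (Real.rpow_nonneg hI0 _) hmm hp0.le
  -- layer cake
  rw [hInt.integral_eq_integral_meas_lt (Filter.Eventually.of_forall hfnn)]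
  set t₀ : ℝ := Real.exp (2 / γ ^ 2) - 1 with ht₀def
  have hγ2 : (0:ℝ) < γ ^ 2 - 1 := by nlinarith
  have ht₀ : 0 < t₀ := by
    have : (1:ℝ) = Real.exp 0 := (Real.exp_zero).symm
    have h2 : Real.exp 0 < Real.exp (2 / γ ^ 2) := Real.exp_lt_exp.mpr (by positivity)
    rw [ht₀def]; rw [Real.exp_zero] at h2; linarith
  set g : ℝ → ℝ := fun t => Set.indicator (Set.Ioc 0 t₀) (fun _ => (1:ℝ)) t
      + Set.indicator (Set.Ioi t₀) (fun t => (t + 1) ^ (-(γ ^ 2))) t with hgdef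
  -- integrability of g pieces on Ioi 0
  have hg1int : Integrable (Set.indicator (Set.Ioc 0 t₀) (fun _ => (1:ℝ)))
      (volume.restrict (Set.Ioi (0:ℝ))) := by
    rw [integrable_indicator_iff measurableSet_Ioc]
    apply (integrableOn_const_iff (C := (1:ℝ))).mpr
    right
    rw [Measure.restrict_apply measurableSet_Ioc]
    exact lt_of_le_of_lt (measure_mono Set.inter_subset_left)
      (by simp [Real.volume_Ioc])
  have hshift : ∀ t : ℝ, Set.indicator (Set.Ioi t₀) (fun t => (t + 1) ^ (-(γ ^ 2))) t
      = Set.indicator (Set.Ioi (t₀ + 1)) (fun u => u ^ (-(γ ^ 2))) (t + 1) := by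
    intro t
    by_cases h : t ∈ Set.Ioi t₀
    · rw [Set.indicator_of_mem h, Set.indicator_of_mem
        (by simp only [Set.mem_Ioi] at h ⊢; linarith)]
    · rw [Set.indicator_of_notMem h, Set.indicator_of_notMem
        (by simp only [Set.mem_Ioi] at h ⊢; linarith)]
  have hg2intOn : IntegrableOn (fun u : ℝ => u ^ (-(γ ^ 2))) (Set.Ioi (t₀ + 1)) volume :=
    integrableOn_Ioi_rpow_of_lt (by nlinarith) (by linarith)
  have hg2full : Integrable (Set.indicator (Set.Ioi t₀) (fun t => (t + 1) ^ (-(γ ^ 2)))) volume := by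
    have h1 : Integrable (Set.indicator (Set.Ioi (t₀ + 1)) (fun u : ℝ => u ^ (-(γ ^ 2)))) volume :=
      (integrable_indicator_iff measurableSet_Ioi).mpr hg2intOn
    have h2 := h1.comp_add_right 1
    simp only [← hshift] at h2
    exact h2
  have hg2int : Integrable (Set.indicator (Set.Ioi t₀) (fun t => (t + 1) ^ (-(γ ^ 2))))
      (volume.restrict (Set.Ioi (0:ℝ))) := hg2full.restrict
  have hgint : Integrable g (volume.restrict (Set.Ioi (0:ℝ))) := hg1int.add hg2int
  -- pointwise bound
  have hbound : ∀ t ∈ Set.Ioi (0:ℝ),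
      (μ {a | t < ΨK (|X a| / η)}).toReal ≤ g t := by
    intro t ht
    simp only [Set.mem_Ioi] at ht
    rcases le_or_gt t t₀ with hcase | hcase
    · have h1 : (μ {a | t < ΨK (|X a| / η)}).toReal ≤ (μ Set.univ).toReal :=
        ENNReal.toReal_mono (measure_ne_top μ _) (measure_mono (Set.subset_univ _))
      rw [measure_univ] at h1
      simp only [ENNReal.toReal_one] at h1
      have h2 : g t = 1 + 0 := by
        rw [hgdef]
        simp only
        rw [Set.indicator_of_mem (Set.mem_Ioc.mpr ⟨ht, hcase⟩),
          Set.indicator_of_notMem (by simp [Set.mem_Ioi]; linarith)]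
      rw [h2]; linarith
    · -- the tail bound
      set s : ℝ := Real.log (t + 1) with hsdef
      have hts : Real.exp s = t + 1 := Real.exp_log (by linarith)
      have hs1 : 2 / γ ^ 2 < s := by
        have h1 : Real.exp (2 / γ ^ 2) < t + 1 := by rw [ht₀def] at hcase; linarith
        have h2 := Real.log_lt_log (Real.exp_pos _) h1
        rwa [Real.log_exp] at h2
      have hs0 : 0 < s := lt_trans (by positivity) hs1
      set p : ℝ := γ ^ 2 * s with hpdef
      have hp2 : 2 ≤ p := by
        rw [hpdef]
        rw [div_lt_iff₀ (by positivity : (0:ℝ) < γ ^ 2)] at hs1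
        nlinarith
      have hp0 : (0:ℝ) < p := by linarith
      obtain ⟨hintp, hmomp⟩ := hXp p hp2
      have hφs : 0 < φ s := by
        have : 0 < Real.sqrt s := Real.sqrt_pos.mpr hs0
        have : 0 ≤ K * s ^ (1/θ) := by positivity
        simp only [hφdef]; linarith
      set u : ℝ := η * φ s with hudef
      have hu : 0 < u := mul_pos hη hφs
      -- event inclusion
      have hsub : {a | t < ΨK (|X a| / η)} ⊆ {x | u ^ p ≤ |X x| ^ p} := by
        intro ω hω
        simp only [Set.mem_setOf_eq] at hω ⊢
        have hlt : u < |X ω| := by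
          by_contra hcon
          push_neg at hcon
          have h1 : |X ω| / η ≤ φ s := by
            rw [div_le_iff₀ hη]
            calc |X ω| ≤ u := hcon
              _ = φ s * η := by rw [hudef]; ring
          have h2 : ΨK (|X ω| / η) ≤ Real.exp s - 1 := hΨφ s hs0.le ▸ hΨmono h1
          rw [hts] at h2
          linarith
        exact Real.rpow_le_rpow hu.le hlt.le hp0.le
      -- Markov
      have hmarkov := mul_meas_ge_le_integral_of_nonneg
        (f := fun ω => |X ω| ^ p)
        (Filter.Eventually.of_forall fun ω => Real.rpow_nonneg (abs_nonneg _) p)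
        hintp (u ^ p)
      have hup : (0:ℝ) < u ^ p := Real.rpow_pos_of_pos hu p
      have h1 : (μ {a | t < ΨK (|X a| / η)}).toReal
          ≤ (μ {x | u ^ p ≤ |X x| ^ p}).toReal :=
        ENNReal.toReal_mono (measure_ne_top μ _) (measure_mono hsub)
      have h2 : (μ {x | u ^ p ≤ |X x| ^ p}).toReal ≤ (∫ ω, |X ω| ^ p ∂μ) / u ^ p := by
        rw [le_div_iff₀ hup]
        calc (μ {x | u ^ p ≤ |X x| ^ p}).toReal * u ^ p
            = u ^ p * (μ {x | u ^ p ≤ |X x| ^ p}).toReal := by ring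
          _ ≤ ∫ ω, |X ω| ^ p ∂μ := hmarkov
      -- the moment value
      have hM : C₁ * Real.sqrt p + C₂ * p ^ (1/θ) = γ * C₁ * φ s := by
        have hsqrt : Real.sqrt p = γ * Real.sqrt s := by
          rw [hpdef, Real.sqrt_mul (by positivity) s, Real.sqrt_sq hγ0.le]
        have hrpow : p ^ ((1:ℝ)/θ) = γ ^ (2/θ) * s ^ ((1:ℝ)/θ) := by
          rw [hpdef, Real.mul_rpow (by positivity) hs0.le]
          congr 1
          rw [← Real.rpow_natCast γ 2, ← Real.rpow_mul hγ0.le]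
          congr 1
          push_cast
          ring
        rw [hsqrt, hrpow, hφdef]
        simp only
        rw [hKdef]
        field_simp
      have hMu : C₁ * Real.sqrt p + C₂ * p ^ (1/θ) = u / Real.exp 1 := by
        rw [hM, hudef, hηdef]
        field_simp [Real.exp_ne_zero]
      have h3 : (∫ ω, |X ω| ^ p ∂μ) / u ^ p ≤ (t + 1) ^ (-(γ ^ 2)) := by
        have h4 : (∫ ω, |X ω| ^ p ∂μ) / u ^ p ≤ (u / Real.exp 1) ^ p / u ^ p := by
          gcongr
          rw [← hMu]; exact hmomp
        have h5 : (u / Real.exp 1) ^ p / u ^ p = Real.exp (-p) := by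
          rw [Real.div_rpow hu.le (Real.exp_pos 1).le p, Real.exp_one_rpow, Real.exp_neg]
          field_simp
        have h5b : Real.exp (-p) = (t + 1) ^ (-(γ ^ 2)) := by
          rw [← hts, ← Real.exp_mul]
          congr 1
          rw [hpdef]; ring
        calc (∫ ω, |X ω| ^ p ∂μ) / u ^ p ≤ (u / Real.exp 1) ^ p / u ^ p := h4
          _ = Real.exp (-p) := h5
          _ = (t + 1) ^ (-(γ ^ 2)) := h5b
      have h6 : g t = 0 + (t + 1) ^ (-(γ ^ 2)) := by
        rw [hgdef]
        simp only
        rw [Set.indicator_of_notMem (by simp [Set.mem_Ioc]; intro h'; linarith),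
          Set.indicator_of_mem (Set.mem_Ioi.mpr hcase)]
      rw [h6, zero_add]
      exact le_trans h1 (le_trans h2 h3)
  -- combine
  calc ∫ t in Set.Ioi (0:ℝ), (μ {a | t < ΨK (|X a| / η)}).toReal
      ≤ ∫ t in Set.Ioi (0:ℝ), g t := by
        apply integral_mono_of_nonneg
        · exact Filter.Eventually.of_forall fun t => ENNReal.toReal_nonneg
        · exact hgint
        · rw [Filter.EventuallyLE, ae_restrict_iff' measurableSet_Ioi]
          exact Filter.Eventually.of_forall hbound
    _ = t₀ + Real.exp (2 * (1 - γ ^ 2) / γ ^ 2) / (γ ^ 2 - 1) := by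
        have hsplit : ∫ t in Set.Ioi (0:ℝ), g t
            = (∫ t in Set.Ioi (0:ℝ), Set.indicator (Set.Ioc 0 t₀) (fun _ => (1:ℝ)) t)
              + ∫ t in Set.Ioi (0:ℝ),
                  Set.indicator (Set.Ioi t₀) (fun t => (t + 1) ^ (-(γ ^ 2))) t :=
          integral_add hg1int hg2int
        have hI1 : ∫ t in Set.Ioi (0:ℝ), Set.indicator (Set.Ioc 0 t₀) (fun _ => (1:ℝ)) t = t₀ := by
          rw [integral_indicator measurableSet_Ioc,
            Measure.restrict_restrict measurableSet_Ioc,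
            Set.inter_eq_self_of_subset_left Set.Ioc_subset_Ioi_self,
            setIntegral_const]
          simp [Real.volume_Ioc, ENNReal.toReal_ofReal ht₀.le, ht₀.le]
        have hI2 : ∫ t in Set.Ioi (0:ℝ),
            Set.indicator (Set.Ioi t₀) (fun t => (t + 1) ^ (-(γ ^ 2))) t
            = Real.exp (2 * (1 - γ ^ 2) / γ ^ 2) / (γ ^ 2 - 1) := by
          have e1 : ∫ t in Set.Ioi (0:ℝ),
              Set.indicator (Set.Ioi t₀) (fun t => (t + 1) ^ (-(γ ^ 2))) t
              = ∫ t : ℝ, Set.indicator (Set.Ioi t₀) (fun t => (t + 1) ^ (-(γ ^ 2))) t := by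
            apply setIntegral_eq_integral_of_forall_compl_eq_zero
            intro x hx
            apply Set.indicator_of_notMem
            simp only [Set.mem_Ioi] at hx ⊢
            intro h'
            exact hx (by linarith)
          have e2 : ∫ t : ℝ, Set.indicator (Set.Ioi t₀) (fun t => (t + 1) ^ (-(γ ^ 2))) t
              = ∫ u : ℝ, Set.indicator (Set.Ioi (t₀ + 1)) (fun u => u ^ (-(γ ^ 2))) u := by
            rw [show (fun t : ℝ => Set.indicator (Set.Ioi t₀) (fun t => (t + 1) ^ (-(γ ^ 2))) t)
                = fun t : ℝ => Set.indicator (Set.Ioi (t₀ + 1)) (fun u => u ^ (-(γ ^ 2))) (t + 1)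
                from funext hshift]
            exact integral_add_right_eq_self _ 1
          rw [e1, e2, integral_indicator measurableSet_Ioi,
            integral_Ioi_rpow_of_lt (by nlinarith) (by linarith : (0:ℝ) < t₀ + 1)]
          rw [ht₀def, sub_add_cancel]
          have harg : (2 / γ ^ 2) * (-(γ ^ 2) + 1) = 2 * (1 - γ ^ 2) / γ ^ 2 := by
            field_simp
            ring
          rw [← Real.exp_mul, harg]
          have hne : -(γ ^ 2) + 1 ≠ 0 := by nlinarith
          field_simp
          ring
        rw [hsplit, hI1, hI2]
    _ ≤ 1 := hγineq
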